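/- Let G be a subgroup of ℚ of the form G = ⋃_i (1/n_i)ℤ with n_i | n_{i+1} (an increasing union of cyclic subgroups), let k be a field in which every element has an n-th root for every n ≥ 1 (k is root-closed), and let F be a G-graded field with F_0 = k and F_g ≠ 0 for all g ∈ G. Then F is isomorphic as a G-graded k-algebra to the group algebra k[G]. -/

import Mathlib

/-- Let `G ≤ ℚ` be an increasing union of cyclic subgroups `(1/nᵢ)ℤ` with
`nᵢ ∣ nᵢ₊₁`, let `k` be a root-closed field, and let `F` be a `G`-graded field
with `F₀ = k` and `F_g ≠ 0` for all `g ∈ G`.  Then `F` is isomorphic, as a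
`G`-graded `k`-algebra, to the group algebra `k[G]`. -/
theorem gradedField_over_rootClosed_iso_groupAlgebra
    (G : AddSubgroup ℚ) (n : ℕ → ℕ)
    (hn0 : ∀ i, n i ≠ 0) (hdvd : ∀ i, n i ∣ n (i + 1))
    (hG : ∀ q : ℚ, q ∈ G ↔ ∃ i, ∃ m : ℤ, q = (m : ℚ) / (n i))
    (k : Type*) [Field k]
    (hroot : ∀ (m : ℕ) (c : k), 0 < m → ∃ c' : k, c' ^ m = c)
    (F : Type*) [CommRing F] [Algebra k F]
    (𝒜 : ↥G → Submodule k F) [GradedAlgebra 𝒜]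
    (hdeg0 : ∀ x ∈ 𝒜 0, ∃ c : k, x = algebraMap k F c)
    (hfield : ∀ x : F, x ≠ 0 → SetLike.IsHomogeneousElem 𝒜 x → IsUnit x)
    (hsupp : ∀ g : ↥G, 𝒜 g ≠ ⊥) :
    ∃ e : F ≃ₐ[k] AddMonoidAlgebra k ↥G,
      ∀ (g : ↥G), ∀ x ∈ 𝒜 g, e x ∈ AddMonoidAlgebra.gradeBy k id g := by
  classical
  -- F is nontrivial
  obtain ⟨x₀, hx₀A, hx₀⟩ := (Submodule.ne_bot_iff _).mp (hsupp 0)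
  haveI : Nontrivial F := ⟨⟨x₀, 0, hx₀⟩⟩
  -- a component-multiplication identity
  have key : ∀ (g : ↥G) (x b : F), x ∈ 𝒜 g →
      (DirectSum.decompose 𝒜 (x * b) (g + -g) : F)
        = x * (DirectSum.decompose 𝒜 b (-g) : F) := by
    intro g x b hx
    lift x to 𝒜 g using hx
    rw [DirectSum.decompose_mul, DirectSum.decompose_coe,
      DirectSum.coe_of_mul_apply_add]
  -- homogeneous inverses
  have hinv : ∀ (g : ↥G) (x : F), x ∈ 𝒜 g → x ≠ 0 → ∃ y ∈ 𝒜 (-g), x * y = 1 := by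
    intro g x hx hx0
    obtain ⟨U, hU⟩ := hfield x hx0 ⟨g, hx⟩
    refine ⟨(DirectSum.decompose 𝒜 ((↑U⁻¹ : Fˣ) : F) (-g) : F), SetLike.coe_mem _, ?_⟩
    have h1 : x * ((↑U⁻¹ : Fˣ) : F) = 1 := by rw [← hU, Units.mul_inv]
    calc x * (DirectSum.decompose 𝒜 ((↑U⁻¹ : Fˣ) : F) (-g) : F)
        = (DirectSum.decompose 𝒜 (x * ((↑U⁻¹ : Fˣ) : F)) (g + -g) : F) :=
          (key g x _ hx).symm
      _ = 1 := by
          rw [h1, add_neg_cancel]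
          exact DirectSum.decompose_of_mem_same 𝒜 (SetLike.one_mem_graded 𝒜)
  -- each graded piece is spanned by any nonzero element
  have hspan : ∀ (g : ↥G) (x : F), x ∈ 𝒜 g → x ≠ 0 → ∀ y ∈ 𝒜 g, ∃ c : k, y = c • x := by
    intro g x hx hx0 y hy
    obtain ⟨z, hz, hxz⟩ := hinv g x hx hx0
    have hyz : y * z ∈ 𝒜 0 := by
      have := SetLike.mul_mem_graded hy hz
      rwa [add_neg_cancel] at this
    obtain ⟨c, hc⟩ := hdeg0 _ hyz
    refine ⟨c, ?_⟩
    calc y = y * (x * z) := by rw [hxz, mul_one]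
      _ = (y * z) * x := by ring
      _ = c • x := by rw [hc, Algebra.smul_def]
  -- the elements of G
  have memG : ∀ (i : ℕ) (m : ℤ), ((m : ℚ) / (n i) : ℚ) ∈ G := fun i m =>
    (hG _).mpr ⟨i, m, rfl⟩
  let qel : ℕ → ℤ → ↥G := fun i m => ⟨(m : ℚ) / (n i), memG i m⟩
  have hne : ∀ i, ((n i : ℚ)) ≠ 0 := fun i => Nat.cast_ne_zero.mpr (hn0 i)
  have ndvd : ∀ i j, i ≤ j → n i ∣ n j := by
    intro i j hij
    induction j, hij using Nat.le_induction with
    | base => exact dvd_rfl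
    | succ j hij ih => exact ih.trans (hdvd j)
  have hqel_shift : ∀ i j (m : ℤ), n i ∣ n j → qel i m = qel j (m * (n j / n i : ℕ)) := by
    intro i j m hd
    obtain ⟨d, hdd⟩ := hd
    have hd0 : d ≠ 0 := by
      intro h; exact hn0 j (by rw [hdd, h, mul_zero])
    apply Subtype.ext
    show (m : ℚ) / (n i) = ((m * (n j / n i : ℕ) : ℤ) : ℚ) / (n j)
    rw [hdd, Nat.mul_div_cancel_left d (Nat.pos_of_ne_zero (hn0 i))]
    push_cast
    rw [div_eq_div_iff (hne i) (by push_cast [hdd] at *; exact mul_ne_zero (hne i) (Nat.cast_ne_zero.mpr hd0))]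
    push_cast
    ring
  have hqel_add : ∀ i (m m' : ℤ), qel i m + qel i m' = qel i (m + m') := by
    intro i m m'
    apply Subtype.ext
    show (m : ℚ) / (n i) + (m' : ℚ) / (n i) = ((m + m' : ℤ) : ℚ) / (n i)
    push_cast
    ring
  have hqel_neg : ∀ i (m : ℤ), -qel i m = qel i (-m) := by
    intro i m
    apply Subtype.ext
    show -((m : ℚ) / (n i)) = ((-m : ℤ) : ℚ) / (n i)
    push_cast
    ring
  have hqel_nsmul : ∀ i (d : ℕ) (m : ℤ), d • qel i m = qel i (d * m) := by
    intro i d m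
    apply Subtype.ext
    show (d : ℕ) • ((m : ℚ) / (n i)) = ((d * m : ℤ) : ℚ) / (n i)
    push_cast
    rw [nsmul_eq_mul]
    push_cast
    ring
  have hqel_inj : ∀ j (a b : ℤ), qel j a = qel j b → a = b := by
    intro j a b h
    have h2 : (a : ℚ) / (n j) = (b : ℚ) / (n j) := congrArg Subtype.val h
    rw [div_eq_div_iff (hne j) (hne j)] at h2
    exact_mod_cast mul_right_cancel₀ (hne j) h2
  -- construct the compatible family of units
  obtain ⟨u0, hu0A, hu00⟩ := (Submodule.ne_bot_iff _).mp (hsupp (qel 0 1))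
  have hstep : ∀ i (x : F), (x ∈ 𝒜 (qel i 1) ∧ x ≠ 0) →
      ∃ y : F, (y ∈ 𝒜 (qel (i+1) 1) ∧ y ≠ 0) ∧ y ^ (n (i+1) / n i) = x := by
    intro i x hx
    obtain ⟨hxA, hx0⟩ := hx
    obtain ⟨v, hvA, hv0⟩ := (Submodule.ne_bot_iff _).mp (hsupp (qel (i+1) 1))
    have hd0 : 0 < n (i+1) / n i :=
      Nat.div_pos (Nat.le_of_dvd (Nat.pos_of_ne_zero (hn0 (i+1))) (hdvd i))
        (Nat.pos_of_ne_zero (hn0 i))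
    have hvd : v ^ (n (i+1) / n i) ∈ 𝒜 (qel i 1) := by
      have hm := SetLike.pow_mem_graded (n (i+1) / n i) hvA
      have he : (n (i+1) / n i) • qel (i+1) 1 = qel i 1 := by
        rw [hqel_nsmul, mul_one, hqel_shift i (i+1) 1 (hdvd i), one_mul]
      rwa [he] at hm
    have hvd0 : v ^ (n (i+1) / n i) ≠ 0 := ((hfield v hv0 ⟨_, hvA⟩).pow _).ne_zero
    obtain ⟨c, hc⟩ := hspan _ _ hvd hvd0 x hxA
    obtain ⟨c', hc'⟩ := hroot (n (i+1) / n i) c hd0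
    have hyd : (algebraMap k F c' * v) ^ (n (i+1) / n i) = x := by
      rw [mul_pow, ← map_pow, hc', ← Algebra.smul_def, ← hc]
    refine ⟨algebraMap k F c' * v, ⟨?_, ?_⟩, hyd⟩
    · rw [← Algebra.smul_def]; exact Submodule.smul_mem _ _ hvA
    · intro h0
      exact hx0 (by rw [← hyd, h0, zero_pow hd0.ne'])
  choose step hstepP using hstep
  let ub : ∀ i : ℕ, {x : F // x ∈ 𝒜 (qel i 1) ∧ x ≠ 0} := fun i =>
    Nat.rec (motive := fun j => {x : F // x ∈ 𝒜 (qel j 1) ∧ x ≠ 0})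
      ⟨u0, hu0A, hu00⟩ (fun i p => ⟨step i p.1 p.2, (hstepP i p.1 p.2).1⟩) i
  obtain ⟨u, huA, hu0, hupow⟩ : ∃ u : ℕ → F, (∀ i, u i ∈ 𝒜 (qel i 1)) ∧ (∀ i, u i ≠ 0) ∧
      ∀ i, u (i+1) ^ (n (i+1) / n i) = u i :=
    ⟨fun i => (ub i).1, fun i => (ub i).2.1, fun i => (ub i).2.2,
      fun i => (hstepP i (ub i).1 (ub i).2).2⟩
  have hcompat : ∀ i j, i ≤ j → u j ^ (n j / n i) = u i := by
    intro i j hij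
    induction j, hij using Nat.le_induction with
    | base => rw [Nat.div_self (Nat.pos_of_ne_zero (hn0 i)), pow_one]
    | succ j hij ih =>
      have h1 := ndvd i j hij
      have h2 := hdvd j
      obtain ⟨a, ha⟩ := h1
      obtain ⟨b, hb⟩ := h2
      have hkey : n (j+1) / n i = (n (j+1) / n j) * (n j / n i) := by
        have hni : 0 < n i := Nat.pos_of_ne_zero (hn0 i)
        have hnia : 0 < n i * a := by rw [← ha]; exact Nat.pos_of_ne_zero (hn0 j)
        rw [hb, ha, Nat.mul_div_cancel_left _ hnia, Nat.mul_div_cancel_left _ hni,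
          mul_assoc, Nat.mul_div_cancel_left _ hni]
        exact Nat.mul_comm a b
      rw [hkey, pow_mul, hupow j, ih]
  -- the units
  have hUe : ∀ i, ∃ U : Fˣ, (U : F) = u i := fun i => hfield (u i) (hu0 i) ⟨_, huA i⟩
  choose U hUc using hUe
  have hUpow : ∀ i (p : ℕ), ((U i ^ p : Fˣ) : F) = u i ^ p := by
    intro i p
    rw [Units.val_pow_eq_pow_val, hUc]
  have zmem : ∀ i (m : ℤ), ((U i ^ m : Fˣ) : F) ∈ 𝒜 (qel i m) := by
    intro i m
    have hnat : ∀ p : ℕ, u i ^ p ∈ 𝒜 (qel i (p : ℤ)) := by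
      intro p
      have hm := SetLike.pow_mem_graded p (huA i)
      have he : p • qel i 1 = qel i (p : ℤ) := by rw [hqel_nsmul, mul_one]
      rwa [he] at hm
    cases m with
    | ofNat p =>
      have h1 : ((U i ^ (Int.ofNat p) : Fˣ) : F) = u i ^ p := by
        rw [Int.ofNat_eq_natCast, zpow_natCast, hUpow]
      rw [h1]
      exact hnat p
    | negSucc p =>
      have h1 : u i ^ (p+1) ∈ 𝒜 (qel i ((p+1 : ℕ) : ℤ)) := hnat (p+1)
      have h2 : u i ^ (p+1) ≠ 0 := by
        rw [← hUpow]; exact Units.ne_zero _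
      obtain ⟨y, hyA, hxy⟩ := hinv _ _ h1 h2
      have h3 : ((U i ^ (Int.negSucc p) : Fˣ) : F) = y := by
        rw [zpow_negSucc]
        refine Units.inv_eq_of_mul_eq_one_right ?_
        rw [hUpow]
        exact hxy
      rw [h3]
      have h4 : -qel i ((p+1 : ℕ) : ℤ) = qel i (Int.negSucc p) := by
        have h5 : Int.negSucc p = -((p+1 : ℕ) : ℤ) := by simp [Int.negSucc_eq]
        rw [h5, ← hqel_neg]
      rwa [h4] at hyA
  -- well-definedness of powers
  have hWd2 : ∀ i j (m m' : ℤ), i ≤ j → qel i m = qel j m' → U i ^ m = U j ^ m' := by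
    intro i j m m' hij hq
    have hdvdij := ndvd i j hij
    have h1 : qel i m = qel j (m * (n j / n i : ℕ)) := hqel_shift i j m hdvdij
    have h2 : m' = m * (n j / n i : ℕ) := hqel_inj j _ _ (hq.symm.trans h1)
    have h3 : U j ^ ((n j / n i : ℕ) : ℤ) = U i := by
      rw [zpow_natCast]
      apply Units.ext
      rw [hUpow, hUc]
      exact hcompat i j hij
    rw [h2, mul_comm, zpow_mul, h3]
  have hWd : ∀ i j (m m' : ℤ), qel i m = qel j m' → U i ^ m = U j ^ m' := by
    intro i j m m' h
    rcases le_total i j with hij | hij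
    · exact hWd2 i j m m' hij h
    · exact (hWd2 j i m' m hij h.symm).symm
  -- the section s : G → Fˣ
  have hrep : ∀ q : ↥G, ∃ i m, q = qel i m := by
    intro q
    obtain ⟨i, m, hm⟩ := (hG q.1).mp q.2
    exact ⟨i, m, Subtype.ext hm⟩
  choose idx mi hqrep using hrep
  let s : ↥G → Fˣ := fun q => U (idx q) ^ (mi q)
  have hs_spec : ∀ i (m : ℤ), s (qel i m) = U i ^ m := fun i m =>
    hWd _ _ _ _ (hqrep (qel i m)).symm
  have hs_mem : ∀ q, ((s q : Fˣ) : F) ∈ 𝒜 q := by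
    intro q
    have : ((s q : Fˣ) : F) ∈ 𝒜 (qel (idx q) (mi q)) := zmem _ _
    rwa [← hqrep q] at this
  have hs_add : ∀ a b : ↥G, s (a + b) = s a * s b := by
    intro a b
    set l := max (idx a) (idx b) with hl
    have h1 : a = qel l (mi a * (n l / n (idx a) : ℕ)) :=
      (hqrep a).trans (hqel_shift _ l _ (ndvd _ l (le_max_left _ _)))
    have h2 : b = qel l (mi b * (n l / n (idx b) : ℕ)) :=
      (hqrep b).trans (hqel_shift _ l _ (ndvd _ l (le_max_right _ _)))
    rw [h1, h2, hqel_add, hs_spec, hs_spec, hs_spec, zpow_add]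
  have hs_zero : s 0 = 1 := by
    have h0 : (0 : ↥G) = qel 0 0 := by
      apply Subtype.ext
      show (0 : ℚ) = ((0 : ℤ) : ℚ) / (n 0)
      simp
    rw [h0, hs_spec, zpow_zero]
  -- the algebra homomorphism
  let σ : Multiplicative ↥G →* F :=
    { toFun := fun a => ((s (Multiplicative.toAdd a) : Fˣ) : F)
      map_one' := by
        show ((s (0 : ↥G) : Fˣ) : F) = 1
        rw [hs_zero]; rfl
      map_mul' := by
        intro a b
        show ((s (Multiplicative.toAdd a + Multiplicative.toAdd b) : Fˣ) : F) = _
        rw [hs_add]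
        rfl }
  let φ : AddMonoidAlgebra k ↥G →ₐ[k] F := AddMonoidAlgebra.lift k F ↥G σ
  have φ_single : ∀ (g : ↥G) (c : k), φ (AddMonoidAlgebra.single g c) = c • ((s g : Fˣ) : F) := by
    intro g c
    rw [AddMonoidAlgebra.lift_single]
    rfl
  have hcomp : ∀ (p : AddMonoidAlgebra k ↥G) (g : ↥G),
      (DirectSum.decompose 𝒜 (φ p) g : F) = p.coeff g • ((s g : Fˣ) : F) := by
    intro p g
    induction p using AddMonoidAlgebra.induction_linear with
    | zero => simp
    | add f f' hf hf' =>
      rw [map_add, DirectSum.decompose_add, DirectSum.add_apply, Submodule.coe_add,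
        hf, hf', AddMonoidAlgebra.coeff_add, Finsupp.add_apply, add_smul]
    | single a b =>
      rw [φ_single]
      by_cases hag : a = g
      · subst hag
        rw [DirectSum.decompose_of_mem_same 𝒜 (Submodule.smul_mem _ _ (hs_mem a)),
          AddMonoidAlgebra.coeff_single, Finsupp.single_eq_same]
      · rw [DirectSum.decompose_of_mem_ne 𝒜 (Submodule.smul_mem _ _ (hs_mem a)) hag,
          AddMonoidAlgebra.coeff_single, Finsupp.single_eq_of_ne (Ne.symm hag), zero_smul]
  have hinj : Function.Injective φ := by
    rw [injective_iff_map_eq_zero]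
    intro p hp
    ext g'
    have hcg := hcomp p g'
    rw [hp, DirectSum.decompose_zero, DirectSum.zero_apply, Submodule.coe_zero] at hcg
    by_contra h
    have hpz : p.coeff g' ≠ 0 := by simpa using h
    apply Units.ne_zero (s g')
    calc ((s g' : Fˣ) : F) = (p.coeff g')⁻¹ • (p.coeff g' • ((s g' : Fˣ) : F)) := by
          rw [smul_smul, inv_mul_cancel₀ hpz, one_smul]
      _ = 0 := by rw [← hcg, smul_zero]
  have hsurj : Function.Surjective φ := by
    intro x
    have hx : x ∈ Subalgebra.toSubmodule φ.range := by
      have htop : iSup 𝒜 = ⊤ := (DirectSum.Decomposition.isInternal 𝒜).submodule_iSup_eq_top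
      have hle : iSup 𝒜 ≤ Subalgebra.toSubmodule φ.range := by
        apply iSup_le
        intro g y hy
        obtain ⟨c, hc⟩ := hspan g _ (hs_mem g) (Units.ne_zero (s g)) y hy
        exact ⟨AddMonoidAlgebra.single g c, (φ_single g c).trans hc.symm⟩
      exact hle (htop ▸ Submodule.mem_top)
    obtain ⟨p, hp⟩ := hx
    exact ⟨p, hp⟩
  let E := AlgEquiv.ofBijective φ ⟨hinj, hsurj⟩
  refine ⟨E.symm, ?_⟩
  intro g x hx
  obtain ⟨c, hc⟩ := hspan g _ (hs_mem g) (Units.ne_zero (s g)) x hx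
  have hx2 : x = φ (AddMonoidAlgebra.single g c) := by rw [φ_single, ← hc]
  rw [hx2]
  have hse : E.symm (φ (AddMonoidAlgebra.single g c)) = AddMonoidAlgebra.single g c := by
    have h5 : φ (AddMonoidAlgebra.single g c) = E (AddMonoidAlgebra.single g c) := rfl
    rw [h5, AlgEquiv.symm_apply_apply]
  rw [hse]
  exact AddMonoidAlgebra.single_mem_gradeBy (R := k) id g c
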